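/- Let U and V be finite-dimensional real inner product spaces, let c be an orthonormal basis of U and b any basis of V (both indexed by finite types), and let P be the Gram matrix P_{ij} = ⟪b_i, b_j⟫. Then P is invertible, and for every linear map T : U → V, the matrix of T with respect to the bases c and b equals P⁻¹ · Aᵀ, where A is the matrix of the adjoint T† : V → U with respect to the bases b and c. (This is the key computation in the paper's proposition on the matrix representation of a persistent sheaf Laplacian, with T the map ð_q^{t,p} into the space 𝔹 with basis {v₁, …, vₙ}.) -/

import Mathlib

open Matrix RealInnerProductSpace

/-- if `c` is an orthonormal basis of `U` and `b` any basis of `V` with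
Gram matrix `P`, then `P` is invertible and for every linear map `T : U → V` the
matrix of `T` (w.r.t. `c`, `b`) equals `P⁻¹ Aᵀ`, where `A` is the matrix of the
adjoint `T†` (w.r.t. `b`, `c`). -/
theorem toMatrix_eq_inv_gram_mul_transpose {U V : Type*}
    [NormedAddCommGroup U] [InnerProductSpace ℝ U] [FiniteDimensional ℝ U]
    [NormedAddCommGroup V] [InnerProductSpace ℝ V] [FiniteDimensional ℝ V]
    {ι κ : Type*} [Fintype ι] [Fintype κ] [DecidableEq ι] [DecidableEq κ]
    (c : OrthonormalBasis ι ℝ U) (b : Module.Basis κ ℝ V)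
    (P : Matrix κ κ ℝ) (hP : ∀ i j, P i j = ⟪b i, b j⟫) :
    IsUnit P ∧
      ∀ T : U →ₗ[ℝ] V,
        LinearMap.toMatrix c.toBasis b T =
          P⁻¹ * (LinearMap.toMatrix b c.toBasis (LinearMap.adjoint T))ᵀ := by
  have hcard : Fintype.card κ = Module.finrank ℝ V := (Module.finrank_eq_card_basis b).symm
  let e : OrthonormalBasis κ ℝ V :=
    (stdOrthonormalBasis ℝ V).reindex (Fintype.equivFinOfCardEq hcard).symm
  set M : Matrix κ κ ℝ := e.toBasis.toMatrix b with hM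
  have hPM : P = Mᵀ * M := by
    ext i j
    rw [hP, ← e.sum_inner_mul_inner (b i) (b j)]
    simp only [Matrix.mul_apply, Matrix.transpose_apply, hM, Module.Basis.toMatrix_apply,
      OrthonormalBasis.coe_toBasis_repr_apply, OrthonormalBasis.repr_apply_apply,
      RCLike.inner_apply, conj_trivial]
    exact Finset.sum_congr rfl fun k _ => by rw [real_inner_comm (e k) (b i)]
  haveI := e.toBasis.invertibleToMatrix b
  have hMunit : IsUnit M := isUnit_of_invertible M
  have hPunit : IsUnit P := by
    rw [hPM]
    refine (Matrix.isUnit_iff_isUnit_det _).2 ?_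
    rw [Matrix.det_mul, Matrix.det_transpose]
    exact ((Matrix.isUnit_iff_isUnit_det M).1 hMunit).mul
      ((Matrix.isUnit_iff_isUnit_det M).1 hMunit)
  refine ⟨hPunit, fun T => ?_⟩
  have hdet : IsUnit P.det := (Matrix.isUnit_iff_isUnit_det P).1 hPunit
  have hkey : P * LinearMap.toMatrix c.toBasis b T =
      (LinearMap.toMatrix b c.toBasis (LinearMap.adjoint T))ᵀ := by
    ext i j
    rw [Matrix.mul_apply, Matrix.transpose_apply, LinearMap.toMatrix_apply]
    have : ∑ k, P i k * LinearMap.toMatrix c.toBasis b T k j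
        = ⟪b i, T (c.toBasis j)⟫ := by
      rw [← b.sum_repr (T (c.toBasis j)), inner_sum]
      simp only [real_inner_smul_right, map_sum, Finsupp.finset_sum_apply]
      refine Finset.sum_congr rfl fun k _ => ?_
      rw [hP, LinearMap.toMatrix_apply]
      simp [b.repr_sum_self, mul_comm]
    rw [this, ← LinearMap.adjoint_inner_left]
    simp only [OrthonormalBasis.coe_toBasis_repr_apply, OrthonormalBasis.repr_apply_apply,
      OrthonormalBasis.coe_toBasis, RCLike.inner_apply, conj_trivial]
    exact real_inner_comm _ _
  rw [← hkey, ← Matrix.mul_assoc, Matrix.nonsing_inv_mul P hdet, Matrix.one_mul]
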